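/- arXiv:2302.14739 — 2 statements merged into one kernel-verified Lean document; each statement's English description precedes it below -/
import Mathlib

section
/- For every integer N ≥ 1, let U_N denote the set of N×N real matrices A with nonnegative entries such that every row sum and every column sum of A equals 1/N. Fix M ∈ ℝ^{N×N} and α > 0, and let T*_α be the unique minimizer over U_N of F(A) = Σ_{i,j} ( M_{ij} A_{ij} + α · A_{ij} log A_{ij} ) (with 0·log 0 = 0). Then every entry of T*_α is strictly positive, and there exist vectors u, v ∈ ℝ^N with strictly positive entries such that (T*_α)_{ij} = u_i · exp(−M_{ij}/α) · v_j for all i, j. -/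
open scoped BigOperators

/-- The transport polytope `U_N`: `N×N` real matrices with nonnegative entries whose
every row sum and every column sum equals `1/N`. -/
def UN (N : ℕ) : Set (Matrix (Fin N) (Fin N) ℝ) :=
  {A | (∀ i j, 0 ≤ A i j) ∧ (∀ i, ∑ j, A i j = 1 / N) ∧ (∀ j, ∑ i, A i j = 1 / N)}

private lemma deriv_term (m c d a : ℝ) (hc : 0 < c) :
    HasDerivAt (fun t : ℝ => m * (c + t * d) + a * ((c + t * d) * Real.log (c + t * d)))
      (d * (m + a * (Real.log c + 1))) 0 := by
  have h1 : HasDerivAt (fun t : ℝ => c + t * d) d 0 := by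
    simpa using ((hasDerivAt_id (0:ℝ)).mul_const d).const_add c
  have hval : (fun t : ℝ => c + t * d) 0 = c := by simp
  have hlog : HasDerivAt (fun t : ℝ => Real.log (c + t * d)) (c⁻¹ * d) 0 := by
    have := (Real.hasDerivAt_log (by simpa [hval] using hc.ne')).comp 0 h1
    simpa [hval, Function.comp_def] using this
  have hfin := (h1.const_mul m).fun_add ((h1.fun_mul hlog).const_mul a)
  refine hfin.congr_deriv ?_
  simp only [zero_mul, add_zero]
  field_simp

/-- If `T` minimizes the entropy-regularized optimal transport objective
`F(A) = Σ_{i,j} (M_{ij} A_{ij} + α A_{ij} log A_{ij})` over `U_N`, then every entry of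
`T` is strictly positive and there are vectors `u, v` with strictly positive entries
such that `T_{ij} = u_i exp(−M_{ij}/α) v_j` for all `i, j`. -/
theorem stmt7 (N : ℕ) (hN : 1 ≤ N) (M : Matrix (Fin N) (Fin N) ℝ) (α : ℝ) (hα : 0 < α)
    (T : Matrix (Fin N) (Fin N) ℝ) (hT : T ∈ UN N)
    (hmin : IsMinOn (fun A => ∑ i, ∑ j, (M i j * A i j + α * (A i j * Real.log (A i j))))
      (UN N) T) :
    (∀ i j, 0 < T i j) ∧
    ∃ u v : Fin N → ℝ, (∀ i, 0 < u i) ∧ (∀ j, 0 < v j) ∧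
      ∀ i j, T i j = u i * Real.exp (-M i j / α) * v j := by
  obtain ⟨hpos, hrow, hcol⟩ := hT
  have hNR : (0:ℝ) < N := by exact_mod_cast hN
  set y : ℝ := ((N:ℝ)^2)⁻¹ with hy_def
  have hy : 0 < y := by positivity
  -- Step 1: positivity
  have hTpos : ∀ i j, 0 < T i j := by
    by_contra hcon
    push_neg at hcon
    obtain ⟨i0, j0, hle0⟩ := hcon
    have hz : T i0 j0 = 0 := le_antisymm hle0 (hpos _ _)
    set C : ℝ := ∑ p, ∑ q,
        (M p q * (y - T p q) + α * (y * Real.log y - T p q * Real.log (T p q))) with hC_def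
    have key : ∀ t : ℝ, 0 < t → t ≤ 1 → 0 ≤ C + α * y * Real.log t := by
      intro t ht ht1
      set A : Matrix (Fin N) (Fin N) ℝ := Matrix.of fun p q => (1 - t) * T p q + t * y with hA_def
      have hAapp : ∀ p q, A p q = (1 - t) * T p q + t * y := fun p q => rfl
      have hsumy : ∀ s : Finset (Fin N), s = Finset.univ → ∑ _x ∈ s, t * y = t / N := by
        intro s hs
        subst hs
        rw [Finset.sum_const, Finset.card_univ, Fintype.card_fin, nsmul_eq_mul, hy_def]
        field_simp
      have hA : A ∈ UN N := by
        refine ⟨fun p q => ?_, fun p => ?_, fun q => ?_⟩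
        · have h1t : 0 ≤ 1 - t := by linarith
          have h2 := mul_nonneg h1t (hpos p q)
          have h3 := mul_pos ht hy
          show (0:ℝ) ≤ (1 - t) * T p q + t * y
          linarith
        · rw [show ∑ q, A p q = ∑ q, ((1-t) * T p q + t * y) from rfl,
            Finset.sum_add_distrib, ← Finset.mul_sum, hrow p, hsumy Finset.univ rfl]
          field_simp
          ring
        · rw [show ∑ p, A p q = ∑ p, ((1-t) * T p q + t * y) from rfl,
            Finset.sum_add_distrib, ← Finset.mul_sum, hcol q, hsumy Finset.univ rfl]
          field_simp
          ring
      have hFle := isMinOn_iff.mp hmin A hA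
      have entry : ∀ p q,
          M p q * A p q + α * (A p q * Real.log (A p q)) ≤
          (M p q * T p q + α * (T p q * Real.log (T p q)))
            + t * (M p q * (y - T p q) + α * (y * Real.log y - T p q * Real.log (T p q)))
            + (if p = i0 ∧ q = j0 then α * (t * y * Real.log t) else 0) := by
        intro p q
        by_cases hpq : p = i0 ∧ q = j0
        · obtain ⟨rfl, rfl⟩ := hpq
          rw [if_pos ⟨rfl, rfl⟩, hAapp, hz]
          rw [show (1 - t) * 0 + t * y = t * y by ring,
            Real.log_mul ht.ne' hy.ne']
          ring_nf
          nlinarith [le_refl (0:ℝ)]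
        · rw [if_neg hpq, hAapp]
          have hconv := Real.convexOn_mul_log.2 (Set.mem_Ici.mpr (hpos p q))
            (Set.mem_Ici.mpr hy.le) (by linarith : (0:ℝ) ≤ 1 - t) ht.le (by ring)
          simp only [smul_eq_mul] at hconv
          nlinarith [mul_le_mul_of_nonneg_left hconv hα.le]
      have hsum := Finset.sum_le_sum
        (fun p (_ : p ∈ Finset.univ) => Finset.sum_le_sum
          (fun q (_ : q ∈ Finset.univ) => entry p q))
      have hsplit : ∑ p, ∑ q,
          ((M p q * T p q + α * (T p q * Real.log (T p q)))
            + t * (M p q * (y - T p q) + α * (y * Real.log y - T p q * Real.log (T p q)))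
            + (if p = i0 ∧ q = j0 then α * (t * y * Real.log t) else 0))
          = (∑ p, ∑ q, (M p q * T p q + α * (T p q * Real.log (T p q))))
            + t * C + α * (t * y * Real.log t) := by
        rw [hC_def]
        simp only [Finset.sum_add_distrib, ← Finset.mul_sum]
        congr 1
        simp [ite_and, Finset.sum_ite_eq']
      rw [hsplit] at hsum
      have h0 : 0 ≤ t * C + α * (t * y * Real.log t) := by
        linarith
      nlinarith [h0]
    -- choose a small t to get a contradiction
    set t0 : ℝ := min 1 (Real.exp (-(C+1)/(α*y))) with ht0_def
    have ht0pos : 0 < t0 := lt_min one_pos (Real.exp_pos _)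
    have ht01 : t0 ≤ 1 := min_le_left _ _
    have hlog : Real.log t0 ≤ -(C+1)/(α*y) := by
      calc Real.log t0 ≤ Real.log (Real.exp (-(C+1)/(α*y))) :=
            Real.log_le_log ht0pos (min_le_right _ _)
        _ = -(C+1)/(α*y) := Real.log_exp _
    have hkey := key t0 ht0pos ht01
    have hay : 0 < α * y := mul_pos hα hy
    have : α * y * Real.log t0 ≤ α * y * (-(C+1)/(α*y)) :=
      mul_le_mul_of_nonneg_left hlog hay.le
    have heq : α * y * (-(C+1)/(α*y)) = -(C+1) := by
      field_simp
    rw [heq] at this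
    linarith
  refine ⟨hTpos, ?_⟩
  -- Step 2: the scaling decomposition
  set i₀ : Fin N := ⟨0, hN⟩ with hi0_def
  set g : Fin N → Fin N → ℝ := fun p q => M p q + α * (Real.log (T p q) + 1) with hg_def
  have key2 : ∀ i j, g i j + g i₀ i₀ = g i i₀ + g i₀ j := by
    intro i j
    by_cases hii : i = i₀
    · subst hii; ring
    by_cases hjj : j = i₀
    · subst hjj; ring
    -- perturbation direction
    set D : Fin N → Fin N → ℝ := fun p q =>
      (if p = i ∧ q = j then 1 else 0) + (if p = i₀ ∧ q = i₀ then 1 else 0)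
      - (if p = i ∧ q = i₀ then 1 else 0) - (if p = i₀ ∧ q = j then 1 else 0) with hD_def
    have hDb : ∀ p q, |D p q| ≤ 2 := by
      intro p q
      rw [abs_le, hD_def]
      constructor <;> · simp only; split_ifs <;> norm_num
    have hDrow : ∀ p, ∑ q, D p q = 0 := by
      intro p
      rw [hD_def]
      simp only [Finset.sum_sub_distrib, Finset.sum_add_distrib]
      simp [ite_and, Finset.sum_ite_eq']
    have hDcol : ∀ q, ∑ p, D p q = 0 := by
      intro q
      rw [hD_def]
      simp only [Finset.sum_sub_distrib, Finset.sum_add_distrib]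
      simp [ite_and, Finset.sum_ite_eq']
    -- a uniform lower bound on entries of T
    obtain ⟨ε, hε, hεle⟩ : ∃ ε : ℝ, 0 < ε ∧ ∀ p q, ε ≤ T p q := by
      refine ⟨Finset.inf' Finset.univ (Finset.univ_nonempty_iff.mpr ⟨(i₀, i₀)⟩)
        (fun p : Fin N × Fin N => T p.1 p.2), ?_, ?_⟩
      · rw [Finset.lt_inf'_iff]
        exact fun b _ => hTpos b.1 b.2
      · exact fun p q => Finset.inf'_le _ (Finset.mem_univ (p, q))
    have hmem : ∀ t : ℝ, |t| < ε/2 →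
        (Matrix.of fun p q => T p q + t * D p q) ∈ UN N := by
      intro t ht
      refine ⟨fun p q => ?_, fun p => ?_, fun q => ?_⟩
      · have h1 : |t * D p q| ≤ |t| * 2 := by
          rw [abs_mul]
          exact mul_le_mul_of_nonneg_left (hDb p q) (abs_nonneg t)
        have h2 := neg_abs_le (t * D p q)
        have h3 := hεle p q
        show (0:ℝ) ≤ T p q + t * D p q
        nlinarith [abs_nonneg t]
      · show ∑ q, (T p q + t * D p q) = 1 / N
        rw [Finset.sum_add_distrib, ← Finset.mul_sum, hDrow p, hrow p]
        ring
      · show ∑ p, (T p q + t * D p q) = 1 / N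
        rw [Finset.sum_add_distrib, ← Finset.mul_sum, hDcol q, hcol q]
        ring
    set f : ℝ → ℝ := fun t => ∑ p, ∑ q,
      (M p q * (T p q + t * D p q) + α * ((T p q + t * D p q) * Real.log (T p q + t * D p q)))
      with hf_def
    have hlocal : IsLocalMin f 0 := by
      have hball : ∀ᶠ t in nhds (0:ℝ), |t| < ε/2 := by
        have := Metric.ball_mem_nhds (0:ℝ) (by positivity : (0:ℝ) < ε/2)
        filter_upwards [this] with t ht
        simpa [Real.dist_eq] using ht
      filter_upwards [hball] with t ht
      have := isMinOn_iff.mp hmin _ (hmem t ht)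
      simp only [Matrix.of_apply] at this
      show f 0 ≤ f t
      rw [hf_def]
      simp only [zero_mul, mul_zero, add_zero]
      exact this
    have hderiv : HasDerivAt f
        (∑ p, ∑ q, D p q * (M p q + α * (Real.log (T p q) + 1))) 0 := by
      rw [hf_def]
      exact HasDerivAt.fun_sum fun p _ => HasDerivAt.fun_sum fun q _ =>
        deriv_term (M p q) (T p q) (D p q) α (hTpos p q)
    have hS := hlocal.hasDerivAt_eq_zero hderiv
    have hexp : ∀ a b : Fin N,
        ∑ p, ∑ q, (if p = a ∧ q = b then (1:ℝ) else 0) * g p q = g a b := by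
      intro a b
      simp [ite_and, Finset.sum_ite_eq', ite_mul, hg_def]
    have hS' : g i j + g i₀ i₀ - g i i₀ - g i₀ j = 0 := by
      have : ∑ p, ∑ q, D p q * (M p q + α * (Real.log (T p q) + 1))
          = g i j + g i₀ i₀ - g i i₀ - g i₀ j := by
        have hrw : ∀ p q, D p q * (M p q + α * (Real.log (T p q) + 1))
            = (if p = i ∧ q = j then (1:ℝ) else 0) * g p q
              + (if p = i₀ ∧ q = i₀ then (1:ℝ) else 0) * g p q
              - (if p = i ∧ q = i₀ then (1:ℝ) else 0) * g p q
              - (if p = i₀ ∧ q = j then (1:ℝ) else 0) * g p q := by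
          intro p q
          rw [hD_def, hg_def]
          ring
        simp only [hrw, Finset.sum_sub_distrib, Finset.sum_add_distrib]
        rw [hexp i j, hexp i₀ i₀, hexp i i₀, hexp i₀ j]
      rw [← this, hS]
    linarith
  -- build u and v
  refine ⟨fun i => Real.exp ((g i i₀ - g i₀ i₀) / α),
    fun j => Real.exp ((g i₀ j - α) / α),
    fun i => Real.exp_pos _, fun j => Real.exp_pos _, fun i j => ?_⟩
  rw [← Real.exp_add, ← Real.exp_add, ← Real.exp_log (hTpos i j)]
  congr 1
  have hk := key2 i j
  have hg1 : g i j = M i j + α * (Real.log (T i j) + 1) := rfl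
  field_simp
  nlinarith [hk, hg1]
end

section
/- Let A and B be n×n real matrices such that A commutes with Aᵀ, D := B·Bᵀ commutes with both A and Aᵀ, and A + Aᵀ is invertible. Then for all real numbers s ≤ t, the matrix M(t, s) := ∫_s^t exp((t − τ)·A) · D · exp((t − τ)·Aᵀ) dτ equals D · ( exp((t − s)·(A + Aᵀ)) − I ) · (A + Aᵀ)^{−1}. -/
open NormedSpace Matrix intervalIntegral

attribute [local instance] Matrix.linftyOpNormedRing Matrix.linftyOpNormedAlgebra

/-- If `A` commutes with `Aᵀ`, `D := B·Bᵀ` commutes with both `A` and `Aᵀ`, and `A + Aᵀ`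
is invertible, then for all reals `s ≤ t`, the Gramian
`M(t, s) = ∫_s^t exp((t − τ)·A)·D·exp((t − τ)·Aᵀ) dτ` (entrywise integral) equals
`D·(exp((t − s)·(A + Aᵀ)) − I)·(A + Aᵀ)⁻¹`. -/
theorem stmt12 {n : ℕ} (A B : Matrix (Fin n) (Fin n) ℝ)
    (hAAT : A * Aᵀ = Aᵀ * A)
    (hDA : (B * Bᵀ) * A = A * (B * Bᵀ))
    (hDAT : (B * Bᵀ) * Aᵀ = Aᵀ * (B * Bᵀ))
    (hinv : IsUnit (A + Aᵀ)) (s t : ℝ) (hst : s ≤ t) :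
    (Matrix.of fun i j => ∫ τ in s..t,
        (exp ((t - τ) • A) * (B * Bᵀ) * exp ((t - τ) • Aᵀ)) i j)
      = (B * Bᵀ) * (exp ((t - s) • (A + Aᵀ)) - 1) * (A + Aᵀ)⁻¹ := by
  set D := B * Bᵀ with hD
  set C := A + Aᵀ with hCdef
  have hCdet : IsUnit C.det := (Matrix.isUnit_iff_isUnit_det _).mp hinv
  have hCinv : C * C⁻¹ = 1 := Matrix.mul_nonsing_inv C hCdet
  -- simplify integrand
  have hintegrand : ∀ τ : ℝ,
      exp ((t - τ) • A) * D * exp ((t - τ) • Aᵀ) = D * exp ((t - τ) • C) := by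
    intro τ
    have hc1 : Commute D A := hDA
    have hc2 : Commute A Aᵀ := hAAT
    have h1 : Commute (exp ((t - τ) • A)) D :=
      (((hc1.smul_right (t - τ)).exp_right).symm)
    have h2 : Commute ((t - τ) • A) ((t - τ) • Aᵀ) :=
      (hc2.smul_left (t - τ)).smul_right (t - τ)
    calc exp ((t - τ) • A) * D * exp ((t - τ) • Aᵀ)
        = D * (exp ((t - τ) • A) * exp ((t - τ) • Aᵀ)) := by
          rw [h1.eq, mul_assoc]
      _ = D * exp ((t - τ) • A + (t - τ) • Aᵀ) :=
          congrArg (D * ·) (Matrix.exp_add_of_commute _ _ h2).symm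
      _ = D * exp ((t - τ) • C) := by rw [hCdef, smul_add]
  -- continuity of the integrand
  have hcont : Continuous fun τ : ℝ => D * exp ((t - τ) • C) := by
    exact (continuous_const.mul (NormedSpace.exp_continuous.comp
      (((continuous_const.sub continuous_id).smul continuous_const))))
  -- FTC
  have hderiv : ∀ τ : ℝ,
      HasDerivAt (fun τ : ℝ => -(D * exp ((t - τ) • C) * C⁻¹))
        (D * exp ((t - τ) • C)) τ := by
    intro τ
    have h1 : HasDerivAt (fun u : ℝ => exp (u • C))
        (exp ((t - τ) • C) * C) (t - τ) := hasDerivAt_exp_smul_const C (t - τ)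
    have h2 : HasDerivAt (fun τ : ℝ => t - τ) (-1) τ := by
      simpa using (hasDerivAt_id τ).const_sub t
    have h3 : HasDerivAt (fun τ : ℝ => exp ((t - τ) • C))
        ((-1 : ℝ) • (exp ((t - τ) • C) * C)) τ := h1.scomp τ h2
    have h4 := ((h3.const_mul D).mul_const C⁻¹).neg
    refine HasDerivAt.congr_deriv h4 ?_
    simp only [neg_smul, one_smul, mul_neg, neg_mul, neg_neg, mul_assoc, hCinv, mul_one]
  have hkey : (∫ τ in s..t, D * exp ((t - τ) • C))
      = D * (exp ((t - s) • C) - 1) * C⁻¹ := by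
    rw [intervalIntegral.integral_eq_sub_of_hasDerivAt
      (fun τ _ => hderiv τ) (hcont.intervalIntegrable s t)]
    simp only [sub_self, zero_smul, NormedSpace.exp_zero, mul_one]
    noncomm_ring
  -- entrywise integral equals Bochner integral
  ext i j
  have hL : ∀ (i j : Fin n), ∃ L : Matrix (Fin n) (Fin n) ℝ →L[ℝ] ℝ,
      ∀ M : Matrix (Fin n) (Fin n) ℝ, L M = M i j := by
    intro i j
    refine ⟨LinearMap.toContinuousLinearMap
      ((LinearMap.proj j).comp ((LinearMap.proj i).comp (Matrix.ofLinearEquiv ℝ).symm.toLinearMap)), ?_⟩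
    intro M; rfl
  obtain ⟨L, hLe⟩ := hL i j
  have hci : Continuous fun τ : ℝ => exp ((t - τ) • A) * D * exp ((t - τ) • Aᵀ) := by
    simp only [hintegrand]; exact hcont
  have hInt : (∫ τ in s..t, exp ((t - τ) • A) * D * exp ((t - τ) • Aᵀ))
      = D * (exp ((t - s) • C) - 1) * C⁻¹ := by
    rw [show (∫ τ in s..t, exp ((t - τ) • A) * D * exp ((t - τ) • Aᵀ))
        = ∫ τ in s..t, D * exp ((t - τ) • C) from by simp only [hintegrand]]
    rw [hkey, mul_assoc]
  have hcomm := L.intervalIntegral_comp_comm (hci.intervalIntegrable (μ := MeasureTheory.volume) s t) (a := s) (b := t)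
  simp only [Matrix.of_apply]
  rw [← hInt]
  refine Eq.trans ?_ (Eq.trans hcomm (hLe _))
  exact intervalIntegral.integral_congr (fun τ _ => (hLe _).symm)
end
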